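/- Consider a Galton–Watson branching process with offspring distribution having mean μ > 1 and variance σ². The survival probability p of the process satisfies p ≥ (μ² − μ)/(μ² − μ + σ²). -/

import Mathlib

open MeasureTheory

theorem stmt3 {Ω : Type*} [MeasurableSpace Ω] (ℙ : Measure Ω) [IsProbabilityMeasure ℙ]
    (Z : ℕ → Ω → ℕ) (μ σ2 : ℝ) (hμ : 1 < μ) (hσ2 : 0 ≤ σ2)
    (hmeas : ∀ m, Measurable (Z m))
    (h0 : ∀ ω, Z 0 ω = 1)
    (hdead : ∀ ω m, Z m ω = 0 → Z (m + 1) ω = 0)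
    (hint : ∀ m, Integrable (fun ω => (Z m ω : ℝ) ^ 2) ℙ)
    (hmean : ∀ m, ∫ ω, (Z (m + 1) ω : ℝ) ∂ℙ = μ * ∫ ω, (Z m ω : ℝ) ∂ℙ)
    (hsecond : ∀ m, ∫ ω, (Z (m + 1) ω : ℝ) ^ 2 ∂ℙ =
        μ ^ 2 * ∫ ω, (Z m ω : ℝ) ^ 2 ∂ℙ + σ2 * ∫ ω, (Z m ω : ℝ) ∂ℙ) :
    (μ ^ 2 - μ) / (μ ^ 2 - μ + σ2) ≤ (ℙ {ω | ∀ m, 1 ≤ Z m ω}).toReal := by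
  have hμ0 : (0:ℝ) < μ := lt_trans one_pos hμ
  have hd : (0:ℝ) < μ ^ 2 - μ := by nlinarith
  have hD : (0:ℝ) < μ ^ 2 - μ + σ2 := by linarith
  -- measurability of real-valued versions
  have hmeasR : ∀ m, Measurable (fun ω => (Z m ω : ℝ)) := fun m =>
    measurable_from_top.comp (hmeas m)
  -- integrability of Z m
  have hint1 : ∀ m, Integrable (fun ω => (Z m ω : ℝ)) ℙ := by
    intro m
    refine (hint m).mono (hmeasR m).aestronglyMeasurable ?_
    filter_upwards with ω
    have h1 : (Z m ω : ℝ) ≤ (Z m ω : ℝ) ^ 2 := by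
      rcases Nat.eq_zero_or_pos (Z m ω) with h | h
      · simp [h]
      · have : (1:ℝ) ≤ (Z m ω : ℝ) := by exact_mod_cast h
        nlinarith
    have h2 : ‖(Z m ω : ℝ)‖ = (Z m ω : ℝ) := Real.norm_of_nonneg (Nat.cast_nonneg _)
    have h3 : ‖(Z m ω : ℝ) ^ 2‖ = (Z m ω : ℝ) ^ 2 := Real.norm_of_nonneg (sq_nonneg _)
    rw [h2, h3]; exact h1
  -- first moment
  have hEm : ∀ m, ∫ ω, (Z m ω : ℝ) ∂ℙ = μ ^ m := by
    intro m
    induction m with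
    | zero => simp [h0]
    | succ n ih => rw [hmean n, ih]; ring
  -- second moment
  have hE2 : ∀ m, ∫ ω, (Z m ω : ℝ) ^ 2 ∂ℙ
      = μ ^ (2 * m) + σ2 * (μ ^ (2 * m) - μ ^ m) / (μ ^ 2 - μ) := by
    intro m
    induction m with
    | zero => simp [h0]
    | succ n ih =>
        rw [hsecond n, ih, hEm n]
        have h2 : 2 * (n + 1) = 2 * n + 2 := by ring
        rw [h2]
        have hne : μ ^ 2 - μ ≠ 0 := ne_of_gt hd
        generalize hDd : μ ^ 2 - μ = D at hne ⊢
        field_simp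
        rw [← hDd]
        ring
  -- the events
  set A : ℕ → Set Ω := fun m => {ω | 1 ≤ Z m ω} with hA
  have hAmeas : ∀ m, MeasurableSet (A m) := fun m =>
    measurableSet_le measurable_const (hmeas m)
  -- Paley–Zygmund per generation
  have hPZ : ∀ m, (μ ^ 2 - μ) / (μ ^ 2 - μ + σ2) ≤ (ℙ (A m)).toReal := by
    intro m
    set P := (ℙ (A m)).toReal with hP
    have hP0 : 0 ≤ P := ENNReal.toReal_nonneg
    -- Z m = Z m * indicator
    have hZind : ∀ ω, (Z m ω : ℝ) = (Z m ω : ℝ) * (A m).indicator (fun _ => (1:ℝ)) ω := by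
      intro ω
      rcases Nat.eq_zero_or_pos (Z m ω) with h | h
      · simp [h]
      · have : ω ∈ A m := h
        simp [Set.indicator_of_mem this]
    have hconj : Real.HolderConjugate 2 2 := by
      constructor <;> norm_num
    have hmem1 : MemLp (fun ω => (Z m ω : ℝ)) (ENNReal.ofReal 2) ℙ := by
      rw [show ENNReal.ofReal 2 = 2 by norm_num]
      exact (memLp_two_iff_integrable_sq (hmeasR m).aestronglyMeasurable).2 (hint m)
    have hmem2 : MemLp ((A m).indicator (fun _ => (1:ℝ))) (ENNReal.ofReal 2) ℙ :=
      (memLp_const (1:ℝ)).indicator (hAmeas m)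
    have hCS := integral_mul_le_Lp_mul_Lq_of_nonneg hconj
      (Filter.Eventually.of_forall (fun ω => Nat.cast_nonneg (Z m ω)))
      (Filter.Eventually.of_forall (fun ω => Set.indicator_nonneg (fun _ _ => zero_le_one) ω))
      hmem1 hmem2
    -- rewrite the pieces of hCS
    have e1 : ∫ ω, (Z m ω : ℝ) * (A m).indicator (fun _ => (1:ℝ)) ω ∂ℙ = μ ^ m := by
      rw [← hEm m]
      exact integral_congr_ae (Filter.Eventually.of_forall (fun ω => (hZind ω).symm))
    have e2 : ∫ ω, (Z m ω : ℝ) ^ (2:ℝ) ∂ℙ = ∫ ω, (Z m ω : ℝ) ^ 2 ∂ℙ := by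
      refine integral_congr_ae (Filter.Eventually.of_forall (fun ω => ?_))
      show (Z m ω : ℝ) ^ (2:ℝ) = (Z m ω : ℝ) ^ 2
      rw [show ((2:ℝ)) = ((2:ℕ):ℝ) by norm_num, Real.rpow_natCast]
    have e3 : ∫ ω, ((A m).indicator (fun _ => (1:ℝ)) ω) ^ (2:ℝ) ∂ℙ = P := by
      have : ∀ ω, ((A m).indicator (fun _ => (1:ℝ)) ω) ^ (2:ℝ)
          = (A m).indicator (fun _ => (1:ℝ)) ω := by
        intro ω
        by_cases h : ω ∈ A m <;> simp [Set.indicator_of_mem, Set.indicator_of_notMem, h]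
      rw [integral_congr_ae (Filter.Eventually.of_forall this),
        integral_indicator_const _ (hAmeas m)]
      simp [hP, Measure.real]
    rw [e1, e2, e3] at hCS
    -- square both sides
    set E2 := ∫ ω, (Z m ω : ℝ) ^ 2 ∂ℙ with hE2def
    have hE2nonneg : 0 ≤ E2 := integral_nonneg (fun ω => sq_nonneg _)
    have hsq : (μ ^ m) ^ 2 ≤ E2 * P := by
      have hx : 0 ≤ μ ^ m := le_of_lt (pow_pos hμ0 m)
      have h1 : (μ ^ m) ^ 2 ≤ (E2 ^ ((1:ℝ)/2) * P ^ ((1:ℝ)/2)) ^ 2 := by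
        apply pow_le_pow_left₀ hx hCS
      have h2 : (E2 ^ ((1:ℝ)/2) * P ^ ((1:ℝ)/2)) ^ 2 = E2 * P := by
        rw [mul_pow, ← Real.rpow_natCast (E2 ^ ((1:ℝ)/2)) 2,
          ← Real.rpow_natCast (P ^ ((1:ℝ)/2)) 2,
          ← Real.rpow_mul hE2nonneg, ← Real.rpow_mul hP0]
        norm_num
      rw [h2] at h1
      exact h1
    -- now conclude the bound
    have hxval : E2 = μ ^ (2*m) + σ2 * (μ ^ (2*m) - μ ^ m) / (μ ^ 2 - μ) := hE2 m
    set x := μ ^ m with hxdef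
    have hx1 : (1:ℝ) ≤ x := one_le_pow₀ (le_of_lt hμ)
    have hx2 : μ ^ (2*m) = x ^ 2 := by rw [hxdef, ← pow_mul]; ring_nf
    rw [hxval, hx2] at hsq
    have hkey : (μ ^ 2 - μ) * x ^ 2 ≤ ((μ ^ 2 - μ) * x ^ 2 + σ2 * x ^ 2 - σ2 * x) * P := by
      have : (μ ^ 2 - μ) * (x ^ 2 + σ2 * (x ^ 2 - x) / (μ ^ 2 - μ))
          = (μ ^ 2 - μ) * x ^ 2 + σ2 * x ^ 2 - σ2 * x := by
        rw [mul_add, mul_div_cancel₀ _ (ne_of_gt hd)]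
        ring
      calc (μ ^ 2 - μ) * x ^ 2 ≤ (μ ^ 2 - μ) * ((x ^ 2 + σ2 * (x ^ 2 - x) / (μ ^ 2 - μ)) * P) := by
            nlinarith
        _ = ((μ ^ 2 - μ) * x ^ 2 + σ2 * x ^ 2 - σ2 * x) * P := by rw [← mul_assoc, this]
    rw [div_le_iff₀ hD]
    have hx2pos : (0:ℝ) < x ^ 2 := by nlinarith
    nlinarith [mul_nonneg (mul_nonneg hσ2 (le_trans zero_le_one hx1)) hP0,
      mul_le_mul_of_nonneg_left hkey (le_of_lt hx2pos)]
  -- survival set as intersection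
  have hSet : {ω | ∀ m, 1 ≤ Z m ω} = ⋂ m, A m := by
    ext ω; simp [hA, Set.mem_iInter]
  have hanti : Antitone A := by
    have hstep : ∀ ω m k, Z m ω = 0 → Z (m + k) ω = 0 := by
      intro ω m k h
      induction k with
      | zero => exact h
      | succ n ih => exact hdead ω (m + n) ih
    intro m n hmn ω hω
    simp only [hA, Set.mem_setOf_eq] at hω ⊢
    by_contra h
    push_neg at h
    have hz : Z m ω = 0 := by omega
    have h2 := hstep ω m (n - m) hz
    rw [Nat.add_sub_cancel' hmn] at h2
    omega
  have htend : Filter.Tendsto (fun m => ℙ (A m)) Filter.atTop (nhds (ℙ (⋂ m, A m))) := by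
    apply tendsto_measure_iInter_atTop (fun m => (hAmeas m).nullMeasurableSet) hanti
    exact ⟨0, measure_ne_top ℙ _⟩
  have hbound : ENNReal.ofReal ((μ ^ 2 - μ) / (μ ^ 2 - μ + σ2)) ≤ ℙ (⋂ m, A m) := by
    refine ge_of_tendsto' htend (fun m => ?_)
    exact ENNReal.ofReal_le_of_le_toReal (hPZ m)
  rw [hSet]
  exact (ENNReal.ofReal_le_iff_le_toReal (measure_ne_top ℙ _)).mp hbound
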